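/- arXiv:1007.1890 — 7 statements merged into one kernel-verified Lean document; each statement's English description precedes it below -/
import Mathlib

section
/- Let K be a nontrivial finite p-group and μ the Möbius function of its subgroup lattice. Then (1/|Φ(K)|) · ∑_{1 ≤ H ≤ K} |H| · μ(H,K) equals p − 1 if K is cyclic, and equals 0 if K is not cyclic, where the sum runs over all subgroups H of K. -/
open Classical in
theorem stmt_5 {K : Type*} [Group K] [Fintype K] [Fintype (Subgroup K)] [Nontrivial K]
    (p : ℕ) (hp : p.Prime) (hK : IsPGroup p K)
    (μ : Subgroup K → Subgroup K → ℚ)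
    (hμ : ∀ A B : Subgroup K, A ≤ B →
      (∑ L ∈ Finset.univ.filter fun L => A ≤ L ∧ L ≤ B, μ A L) = if A = B then 1 else 0) :
    (1 / (Nat.card (frattini K) : ℚ)) * ∑ H : Subgroup K, (Nat.card H : ℚ) * μ H ⊤ =
      if IsCyclic K then (p : ℚ) - 1 else 0 := by
  classical
  set U : Matrix (Subgroup K) (Subgroup K) ℚ :=
    fun A B => if A ≤ B then μ A B else 0 with hU
  set Z : Matrix (Subgroup K) (Subgroup K) ℚ :=
    fun A B => if A ≤ B then 1 else 0 with hZ
  have hUZ : U * Z = 1 := by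
    ext A B
    rw [Matrix.mul_apply, Matrix.one_apply]
    by_cases hAB : A ≤ B
    · rw [← hμ A B hAB, Finset.sum_filter]
      apply Finset.sum_congr rfl
      intro L _
      simp only [hU, hZ]
      by_cases h1 : A ≤ L <;> by_cases h2 : L ≤ B <;> simp [h1, h2]
    · have hne : A ≠ B := fun h => hAB (h ▸ le_refl A)
      rw [if_neg hne]
      apply Finset.sum_eq_zero
      intro L _
      simp only [hU, hZ]
      by_cases h1 : A ≤ L <;> by_cases h2 : L ≤ B <;> simp [h1, h2]
      exact absurd (h1.trans h2) hAB
  have hZU : Z * U = 1 := mul_eq_one_comm.mp hUZ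
  -- The key identity: the sum counts generators of K.
  have key : (∑ H : Subgroup K, (Nat.card H : ℚ) * μ H ⊤) =
      ∑ x : K, (if Subgroup.zpowers x = ⊤ then (1 : ℚ) else 0) := by
    have cardH : ∀ H : Subgroup K, (Nat.card H : ℚ) =
        ∑ x : K, (if x ∈ H then (1 : ℚ) else 0) := by
      intro H
      rw [Finset.sum_boole, Nat.card_eq_fintype_card, Fintype.card_subtype]
    calc (∑ H : Subgroup K, (Nat.card H : ℚ) * μ H ⊤)
        = ∑ H : Subgroup K, ∑ x : K, (if x ∈ H then (1 : ℚ) else 0) * μ H ⊤ := by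
          apply Finset.sum_congr rfl; intro H _; rw [cardH H, Finset.sum_mul]
      _ = ∑ x : K, ∑ H : Subgroup K, (if x ∈ H then (1 : ℚ) else 0) * μ H ⊤ :=
          Finset.sum_comm
      _ = ∑ x : K, (if Subgroup.zpowers x = ⊤ then (1 : ℚ) else 0) := by
          apply Finset.sum_congr rfl
          intro x _
          have := congrFun (congrFun hZU (Subgroup.zpowers x)) ⊤
          rw [Matrix.mul_apply, Matrix.one_apply] at this
          rw [← this]
          apply Finset.sum_congr rfl
          intro H _
          simp only [hZ, hU, Subgroup.zpowers_le, le_top, if_true]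
  rw [key]
  by_cases hc : IsCyclic K
  · rw [if_pos hc]
    obtain ⟨g, hg⟩ := hc.exists_generator
    have hgtop : Subgroup.zpowers g = ⊤ := by
      rw [eq_top_iff]; intro x _; exact hg x
    have horder : orderOf g = Nat.card K := orderOf_eq_card_of_forall_mem_zpowers hg
    have : Fact p.Prime := ⟨hp⟩
    obtain ⟨n, hn⟩ := IsPGroup.iff_card.mp hK
    have hn1 : 1 ≤ n := by
      rcases Nat.eq_zero_or_pos n with h | h
      · subst h
        have h5 : 1 < Nat.card K := Finite.one_lt_card
        rw [hn] at h5; simp at h5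
      · exact h
    set M : Subgroup K := Subgroup.zpowers (g ^ p) with hM
    -- every subgroup is ⊤ or included in M
    have chain : ∀ H : Subgroup K, H = ⊤ ∨ H ≤ M := by
      intro H
      by_cases hH : H = ⊤
      · exact Or.inl hH
      · right
        intro x hx
        obtain ⟨k, rfl⟩ := hg x
        by_cases hpk : (p : ℤ) ∣ k
        · obtain ⟨m, rfl⟩ := hpk
          show g ^ ((p : ℤ) * m) ∈ M
          rw [zpow_mul, zpow_natCast]
          exact Subgroup.zpow_mem M (Subgroup.mem_zpowers _) m
        · exfalso
          apply hH
          rw [eq_top_iff, ← hgtop]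
          have hco : IsCoprime k ((p : ℤ) ^ n) := by
            apply IsCoprime.pow_right
            exact (((Nat.prime_iff_prime_int.mp hp).coprime_iff_not_dvd).mpr hpk).symm
          obtain ⟨a, b, hab⟩ := hco
          have hgpn : g ^ ((p : ℤ) ^ n) = 1 := by
            have h1 : g ^ (p ^ n) = 1 := by
              rw [← hn, ← horder]; exact pow_orderOf_eq_one g
            have h2 : ((p : ℤ) ^ n) = ((p ^ n : ℕ) : ℤ) := by push_cast; ring
            rw [h2, zpow_natCast, h1]
          have hgeq : g = (g ^ k) ^ a := by
            calc g = g ^ (a * k + b * (p : ℤ) ^ n) := by rw [hab, zpow_one]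
              _ = (g ^ k) ^ a * (g ^ ((p : ℤ) ^ n)) ^ b := by
                  rw [mul_comm a k, mul_comm b _, zpow_add, zpow_mul, zpow_mul]
              _ = (g ^ k) ^ a := by rw [hgpn, one_zpow, mul_one]
          rw [Subgroup.zpowers_le, hgeq]
          exact Subgroup.zpow_mem H hx a
    -- card of M
    have hcardM : Nat.card M = p ^ (n - 1) := by
      rw [hM, Nat.card_zpowers, orderOf_pow, horder, hn,
        Nat.gcd_eq_right (dvd_pow_self p (by omega))]
      have h3 : p ^ n = p ^ (n - 1) * p := by
        rw [← pow_succ]; congr 1; omega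
      rw [h3, Nat.mul_div_cancel _ hp.pos]
    have hMne : M ≠ ⊤ := by
      intro h
      have h4 : Nat.card M = p ^ n := by
        rw [h, ← hn]; exact Nat.card_congr Subgroup.topEquiv.toEquiv
      rw [hcardM] at h4
      have := Nat.pow_right_injective hp.two_le h4
      omega
    -- generators are exactly the elements outside M
    have hgen : ∀ x : K, Subgroup.zpowers x = ⊤ ↔ x ∉ M := by
      intro x
      constructor
      · intro hx hxM
        apply hMne
        rw [eq_top_iff, ← hx, Subgroup.zpowers_le]
        exact hxM
      · intro hx
        rcases chain (Subgroup.zpowers x) with h | h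
        · exact h
        · exact absurd (h (Subgroup.mem_zpowers x)) hx
    -- frattini K = M
    have hfrat : frattini K = M := by
      have hcoatom : IsCoatom M := by
        constructor
        · exact hMne
        · intro H hH
          rcases chain H with h | h
          · exact h
          · exact absurd h (not_le_of_gt hH)
      apply le_antisymm (frattini_le_coatom hcoatom)
      rw [frattini, Order.radical]
      apply le_iInf₂
      intro C hC
      rcases chain C with h | h
      · exact absurd h hC.1
      · rcases eq_or_lt_of_le h with h' | h'
        · exact h'.ge
        · exact absurd (hC.2 M h') hMne
    -- compute the sum
    have hsum : (∑ x : K, (if Subgroup.zpowers x = ⊤ then (1 : ℚ) else 0)) =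
        (p : ℚ) ^ n - (p : ℚ) ^ (n - 1) := by
      calc (∑ x : K, (if Subgroup.zpowers x = ⊤ then (1 : ℚ) else 0))
          = ∑ x : K, ((1 : ℚ) - if x ∈ M then 1 else 0) := by
            apply Finset.sum_congr rfl
            intro x _
            by_cases h : x ∈ M
            · rw [if_pos h, if_neg (fun ht => (hgen x).mp ht h)]; ring
            · rw [if_pos ((hgen x).mpr h), if_neg h]; ring
        _ = (Nat.card K : ℚ) - (Nat.card M : ℚ) := by
            rw [Finset.sum_sub_distrib, Finset.sum_const, Finset.sum_boole,
              Nat.card_eq_fintype_card (α := M), Fintype.card_subtype,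
              Nat.card_eq_fintype_card (α := K)]
            simp [Finset.card_univ]
        _ = (p : ℚ) ^ n - (p : ℚ) ^ (n - 1) := by
            rw [hn, hcardM]; push_cast; ring
    rw [hsum, hfrat, hcardM]
    have hppos : (0 : ℚ) < (p : ℚ) := by exact_mod_cast hp.pos
    have hp0 : ((p : ℚ)) ^ (n - 1) ≠ 0 := by positivity
    have hpn : (p : ℚ) ^ n = (p : ℚ) * (p : ℚ) ^ (n - 1) := by
      rw [← pow_succ']
      congr 1
      omega
    push_cast
    rw [hpn]
    field_simp
  · rw [if_neg hc]
    have hne : ∀ x : K, Subgroup.zpowers x ≠ ⊤ := by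
      intro x hx
      apply hc
      exact ⟨⟨x, fun y => by rw [← Subgroup.mem_zpowers_iff, hx]; exact Subgroup.mem_top y⟩⟩
    rw [Finset.sum_congr rfl (fun x _ => if_neg (hne x)), Finset.sum_const]
    simp
end

section
/- Let G₁ and G₂ be finite groups and p a prime. Then ∑_{H ≤ G₁×G₂, H a p-subgroup} μ(H) = (∑_{H₁ ≤ G₁, H₁ a p-subgroup} μ(H₁)) · (∑_{H₂ ≤ G₂, H₂ a p-subgroup} μ(H₂)), where μ(H) = μ(1,H) is the Möbius function of the subgroup lattice and the sums include the trivial subgroup. Equivalently, 1 − χ(S*_{G₁×G₂}) = (1 − χ(S*_{G₁}))·(1 − χ(S*_{G₂})). -/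
open Classical in
private lemma mu_inv_unique {α : Type*} [PartialOrder α] [Fintype α]
    [inst : DecidableRel ((· ≤ ·) : α → α → Prop)] (f g : α → ℚ)
    (h : ∀ x : α, ∑ y ∈ Finset.univ.filter (· ≤ x), f y
        = ∑ y ∈ Finset.univ.filter (· ≤ x), g y) :
    ∀ x, f x = g x := by
  classical
  intro x
  induction x using WellFoundedLT.induction with
  | _ x ih =>
    have hsplit : (Finset.univ.filter (· ≤ x))
        = insert x (Finset.univ.filter (· < x)) := by
      ext y
      simp only [Finset.mem_filter, Finset.mem_univ, true_and, Finset.mem_insert]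
      constructor
      · intro hy
        rcases lt_or_eq_of_le hy with h' | h'
        · exact Or.inr h'
        · exact Or.inl h'
      · rintro (rfl | h')
        · exact le_rfl
        · exact le_of_lt h'
    have hx : x ∉ Finset.univ.filter (· < x) := by simp
    have h' := h x
    rw [hsplit, Finset.sum_insert hx, Finset.sum_insert hx] at h'
    have h'' : ∑ y ∈ Finset.univ.filter (· < x), f y
        = ∑ y ∈ Finset.univ.filter (· < x), g y := by
      apply Finset.sum_congr rfl
      intro y hy
      exact ih y (by simpa using hy)
    linarith

open Classical in
private lemma sum_subtype_filter {β : Type*} [Fintype β] {P Q : β → Prop}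
    (h : ∀ b, Q b → P b) (f : β → ℚ) :
    ∑ y ∈ Finset.univ.filter (fun y : {b // P b} => Q ↑y), f ↑y
      = ∑ b ∈ Finset.univ.filter Q, f b := by
  apply Finset.sum_bij (fun (y : {b // P b}) (_ : y ∈ Finset.univ.filter
      (fun y : {b // P b} => Q ↑y)) => (y : β))
  · intro a ha
    simp only [Finset.mem_filter, Finset.mem_univ, true_and] at ha ⊢
    exact ha
  · intro a _ b _ hab
    exact Subtype.ext hab
  · intro b hb
    simp only [Finset.mem_filter, Finset.mem_univ, true_and] at hb
    exact ⟨⟨b, h b hb⟩, by simp [hb], rfl⟩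
  · intros
    rfl

private lemma isPGroup_prod {p : ℕ} {G K : Type*} [Group G] [Group K]
    (hG : IsPGroup p G) (hK : IsPGroup p K) : IsPGroup p (G × K) := by
  intro g
  obtain ⟨n, hn⟩ := hG g.1
  obtain ⟨m, hm⟩ := hK g.2
  refine ⟨n + m, ?_⟩
  have h1 : g.1 ^ p ^ (n + m) = 1 := by
    rw [pow_add, pow_mul, hn, one_pow]
  have h2 : g.2 ^ p ^ (n + m) = 1 := by
    rw [pow_add, mul_comm, pow_mul, hm, one_pow]
  exact Prod.ext (by simpa using h1) (by simpa using h2)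

open Classical in
theorem stmt_12 {G₁ G₂ : Type*} [Group G₁] [Group G₂] [Fintype G₁] [Fintype G₂]
    [Fintype (Subgroup (G₁ × G₂))] [Fintype (Subgroup G₁)] [Fintype (Subgroup G₂)]
    (p : ℕ) (hp : p.Prime)
    (μ : Subgroup (G₁ × G₂) → Subgroup (G₁ × G₂) → ℚ)
    (hμ : ∀ A B : Subgroup (G₁ × G₂), A ≤ B →
      (∑ L ∈ Finset.univ.filter fun L => A ≤ L ∧ L ≤ B, μ A L) = if A = B then 1 else 0)
    (μ₁ : Subgroup G₁ → Subgroup G₁ → ℚ)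
    (hμ₁ : ∀ A B : Subgroup G₁, A ≤ B →
      (∑ L ∈ Finset.univ.filter fun L => A ≤ L ∧ L ≤ B, μ₁ A L) = if A = B then 1 else 0)
    (μ₂ : Subgroup G₂ → Subgroup G₂ → ℚ)
    (hμ₂ : ∀ A B : Subgroup G₂, A ≤ B →
      (∑ L ∈ Finset.univ.filter fun L => A ≤ L ∧ L ≤ B, μ₂ A L) = if A = B then 1 else 0) :
    (∑ H ∈ Finset.univ.filter fun H : Subgroup (G₁ × G₂) => IsPGroup p H, μ ⊥ H)
      = (∑ H₁ ∈ Finset.univ.filter fun H₁ : Subgroup G₁ => IsPGroup p H₁, μ₁ ⊥ H₁) *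
        (∑ H₂ ∈ Finset.univ.filter fun H₂ : Subgroup G₂ => IsPGroup p H₂, μ₂ ⊥ H₂) := by
  -- projections
  set π₁ : Subgroup (G₁ × G₂) → Subgroup G₁ :=
    fun H => Subgroup.map (MonoidHom.fst G₁ G₂) H with hπ₁def
  set π₂ : Subgroup (G₁ × G₂) → Subgroup G₂ :=
    fun H => Subgroup.map (MonoidHom.snd G₁ G₂) H with hπ₂def
  -- the poset of pairs of p-subgroups
  let α := {K : Subgroup G₁ // IsPGroup p K} × {K : Subgroup G₂ // IsPGroup p K}
  -- basic facts
  have factProd : ∀ (K₁ : Subgroup G₁) (K₂ : Subgroup G₂),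
      IsPGroup p K₁ → IsPGroup p K₂ → IsPGroup p (K₁.prod K₂) := by
    intro K₁ K₂ h₁ h₂
    exact (isPGroup_prod h₁ h₂).of_equiv (Subgroup.prodEquiv K₁ K₂).symm
  have factLe : ∀ (H : Subgroup (G₁ × G₂)) (K₁ : Subgroup G₁) (K₂ : Subgroup G₂),
      H ≤ K₁.prod K₂ ↔ π₁ H ≤ K₁ ∧ π₂ H ≤ K₂ := by
    intro H K₁ K₂
    exact Subgroup.le_prod_iff
  have factP : ∀ (H : Subgroup (G₁ × G₂)) (K₁ : Subgroup G₁) (K₂ : Subgroup G₂),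
      IsPGroup p K₁ → IsPGroup p K₂ → H ≤ K₁.prod K₂ → IsPGroup p H := by
    intro H K₁ K₂ h₁ h₂ hle
    exact (factProd K₁ K₂ h₁ h₂).to_le hle
  have factBot : ∀ (K₁ : Subgroup G₁) (K₂ : Subgroup G₂),
      K₁.prod K₂ = ⊥ ↔ K₁ = ⊥ ∧ K₂ = ⊥ := by
    intro K₁ K₂
    constructor
    · intro h
      constructor
      · ext x
        simp only [Subgroup.mem_bot]
        constructor
        · intro hx
          have : ((x, 1) : G₁ × G₂) ∈ K₁.prod K₂ :=
            Subgroup.mem_prod.2 ⟨hx, one_mem K₂⟩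
          rw [h, Subgroup.mem_bot] at this
          exact congrArg Prod.fst this
        · rintro rfl; exact one_mem K₁
      · ext x
        simp only [Subgroup.mem_bot]
        constructor
        · intro hx
          have : ((1, x) : G₁ × G₂) ∈ K₁.prod K₂ :=
            Subgroup.mem_prod.2 ⟨one_mem K₁, hx⟩
          rw [h, Subgroup.mem_bot] at this
          exact congrArg Prod.snd this
        · rintro rfl; exact one_mem K₂
    · rintro ⟨rfl, rfl⟩
      exact Subgroup.bot_prod_bot
  -- the projection map to α
  let proj : Subgroup (G₁ × G₂) → α := fun H =>
    if h : IsPGroup p H then (⟨π₁ H, h.map _⟩, ⟨π₂ H, h.map _⟩)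
    else (⟨⊥, IsPGroup.of_bot⟩, ⟨⊥, IsPGroup.of_bot⟩)
  have proj_eq : ∀ (H : Subgroup (G₁ × G₂)) (h : IsPGroup p H),
      proj H = (⟨π₁ H, h.map _⟩, ⟨π₂ H, h.map _⟩) := by
    intro H h
    simp only [proj, dif_pos h]
  -- the fiber sums
  let F : α → ℚ := fun y =>
    ∑ H ∈ Finset.univ.filter
      (fun H : Subgroup (G₁ × G₂) => π₁ H = ↑y.1 ∧ π₂ H = ↑y.2), μ ⊥ H
  let Gg : α → ℚ := fun y => μ₁ ⊥ ↑y.1 * μ₂ ⊥ ↑y.2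
  -- main fiber description lemma
  have fiber_p : ∀ (H : Subgroup (G₁ × G₂)) (y : α),
      (π₁ H = ↑y.1 ∧ π₂ H = ↑y.2) → IsPGroup p H := by
    rintro H y ⟨h1, h2⟩
    refine factP H ↑y.1 ↑y.2 y.1.2 y.2.2 ?_
    rw [factLe, h1, h2]
    exact ⟨le_refl _, le_refl _⟩
  have proj_iff : ∀ (H : Subgroup (G₁ × G₂)) (y : α), IsPGroup p H →
      (proj H = y ↔ (π₁ H = ↑y.1 ∧ π₂ H = ↑y.2)) := by
    intro H y hH
    rw [proj_eq H hH]
    constructor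
    · intro h
      rw [← h]
      exact ⟨rfl, rfl⟩
    · intro ⟨h1, h2⟩
      exact Prod.ext (Subtype.ext h1) (Subtype.ext h2)
  have fiber_eq : ∀ (s : Finset (Subgroup (G₁ × G₂))) (y : α),
      (∀ H ∈ s, IsPGroup p H) →
      (∀ H : Subgroup (G₁ × G₂), (π₁ H = ↑y.1 ∧ π₂ H = ↑y.2) → H ∈ s) →
      s.filter (fun H => proj H = y)
        = Finset.univ.filter (fun H : Subgroup (G₁ × G₂) => π₁ H = ↑y.1 ∧ π₂ H = ↑y.2) := by
    intro s y hs hfib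
    ext H
    simp only [Finset.mem_filter, Finset.mem_univ, true_and]
    constructor
    · rintro ⟨hH, hpr⟩
      exact (proj_iff H y (hs H hH)).1 hpr
    · intro h
      exact ⟨hfib H h, (proj_iff H y (fiber_p H y h)).2 h⟩
  -- inversion hypothesis
  have hinv : ∀ x : α, ∑ y ∈ Finset.univ.filter (· ≤ x), F y
      = ∑ y ∈ Finset.univ.filter (· ≤ x), Gg y := by
    intro x
    obtain ⟨⟨K₁, hK₁⟩, ⟨K₂, hK₂⟩⟩ := x
    set x : α := (⟨K₁, hK₁⟩, ⟨K₂, hK₂⟩) with hxdef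
    -- LHS
    have hL : ∑ y ∈ Finset.univ.filter (· ≤ x), F y
        = ∑ H ∈ Finset.univ.filter (fun H : Subgroup (G₁ × G₂) => H ≤ K₁.prod K₂), μ ⊥ H := by
      rw [← Finset.sum_fiberwise_of_maps_to (g := proj)
        (t := Finset.univ.filter (· ≤ x)) ?_ (fun H => μ ⊥ H)]
      · apply Finset.sum_congr rfl
        intro y hy
        simp only [Finset.mem_filter, Finset.mem_univ, true_and] at hy
        rw [fiber_eq _ y ?_ ?_]
        · intro H hH
          simp only [Finset.mem_filter, Finset.mem_univ, true_and] at hH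
          exact factP H K₁ K₂ hK₁ hK₂ hH
        · intro H ⟨h1, h2⟩
          simp only [Finset.mem_filter, Finset.mem_univ, true_and]
          rw [factLe, h1, h2]
          exact ⟨hy.1, hy.2⟩
      · intro H hH
        simp only [Finset.mem_filter, Finset.mem_univ, true_and] at hH ⊢
        have hHp : IsPGroup p H := factP H K₁ K₂ hK₁ hK₂ hH
        rw [proj_eq H hHp]
        have := (factLe H K₁ K₂).1 hH
        exact ⟨this.1, this.2⟩
    have hL2 : ∑ H ∈ Finset.univ.filter
        (fun H : Subgroup (G₁ × G₂) => H ≤ K₁.prod K₂), μ ⊥ H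
        = if K₁ = ⊥ ∧ K₂ = ⊥ then 1 else 0 := by
      have := hμ ⊥ (K₁.prod K₂) bot_le
      rw [show (Finset.univ.filter fun L => ⊥ ≤ L ∧ L ≤ K₁.prod K₂)
          = Finset.univ.filter (fun H : Subgroup (G₁ × G₂) => H ≤ K₁.prod K₂) by
        apply Finset.filter_congr; intro L _; simp] at this
      rw [this]
      by_cases hb : K₁ = ⊥ ∧ K₂ = ⊥
      · obtain ⟨rfl, rfl⟩ := hb
        simp [Subgroup.bot_prod_bot]
      · rw [if_neg (fun h => hb ((factBot K₁ K₂).1 h.symm)), if_neg hb]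
    -- RHS
    have hR : ∑ y ∈ Finset.univ.filter (· ≤ x), Gg y
        = (if K₁ = ⊥ then (1 : ℚ) else 0) * (if K₂ = ⊥ then (1 : ℚ) else 0) := by
      have hfil : Finset.univ.filter (· ≤ x)
          = (Finset.univ.filter (· ≤ x.1)) ×ˢ (Finset.univ.filter (· ≤ x.2)) := by
        ext y
        rw [Finset.mem_product]
        simp only [Finset.mem_filter, Finset.mem_univ, true_and]
        exact Iff.rfl
      rw [hfil]
      have hps : ∑ y ∈ (Finset.univ.filter (· ≤ x.1)) ×ˢ (Finset.univ.filter (· ≤ x.2)), Gg y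
          = ∑ y₁ ∈ Finset.univ.filter (· ≤ x.1), ∑ y₂ ∈ Finset.univ.filter (· ≤ x.2),
            μ₁ ⊥ ↑y₁ * μ₂ ⊥ ↑y₂ :=
        Finset.sum_product' (Finset.univ.filter (· ≤ x.1)) (Finset.univ.filter (· ≤ x.2))
          (fun a b => μ₁ ⊥ ↑a * μ₂ ⊥ ↑b)
      rw [hps, ← Finset.sum_mul_sum]
      congr 1
      · have h1 : ∑ y₁ ∈ Finset.univ.filter (· ≤ x.1), μ₁ ⊥ (↑y₁ : Subgroup G₁)
            = ∑ L ∈ Finset.univ.filter (fun L : Subgroup G₁ => L ≤ K₁), μ₁ ⊥ L := by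
          have : ∀ y₁ : {K : Subgroup G₁ // IsPGroup p K}, y₁ ≤ x.1 ↔ (↑y₁ : Subgroup G₁) ≤ K₁ :=
            fun y₁ => Iff.rfl
          rw [show (Finset.univ.filter (· ≤ x.1))
              = (Finset.univ.filter (fun y₁ : {K : Subgroup G₁ // IsPGroup p K} =>
                  (↑y₁ : Subgroup G₁) ≤ K₁)) by
            apply Finset.filter_congr; intro y₁ _; simp [this y₁]]
          exact sum_subtype_filter (fun L hL => hK₁.to_le hL) (μ₁ ⊥)
        rw [h1]
        have := hμ₁ ⊥ K₁ bot_le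
        rw [show (Finset.univ.filter fun L => ⊥ ≤ L ∧ L ≤ K₁)
            = Finset.univ.filter (fun L : Subgroup G₁ => L ≤ K₁) by
          apply Finset.filter_congr; intro L _; simp] at this
        rw [this]
        by_cases hb : K₁ = ⊥
        · simp [hb]
        · rw [if_neg (fun h => hb h.symm), if_neg hb]
      · have h2 : ∑ y₂ ∈ Finset.univ.filter (· ≤ x.2), μ₂ ⊥ (↑y₂ : Subgroup G₂)
            = ∑ L ∈ Finset.univ.filter (fun L : Subgroup G₂ => L ≤ K₂), μ₂ ⊥ L := by
          rw [show (Finset.univ.filter (· ≤ x.2))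
              = (Finset.univ.filter (fun y₂ : {K : Subgroup G₂ // IsPGroup p K} =>
                  (↑y₂ : Subgroup G₂) ≤ K₂)) by
            apply Finset.filter_congr; intro y₂ _; exact Iff.rfl]
          exact sum_subtype_filter (fun L hL => hK₂.to_le hL) (μ₂ ⊥)
        rw [h2]
        have := hμ₂ ⊥ K₂ bot_le
        rw [show (Finset.univ.filter fun L => ⊥ ≤ L ∧ L ≤ K₂)
            = Finset.univ.filter (fun L : Subgroup G₂ => L ≤ K₂) by
          apply Finset.filter_congr; intro L _; simp] at this
        rw [this]
        by_cases hb : K₂ = ⊥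
        · simp [hb]
        · rw [if_neg (fun h => hb h.symm), if_neg hb]
    rw [hL, hL2, hR]
    by_cases h1 : K₁ = ⊥ <;> by_cases h2 : K₂ = ⊥ <;> simp [h1, h2]
  -- apply inversion
  have hFG : ∀ y : α, F y = Gg y := mu_inv_unique F Gg hinv
  -- final assembly
  have hmain : (∑ H ∈ Finset.univ.filter fun H : Subgroup (G₁ × G₂) => IsPGroup p H, μ ⊥ H)
      = ∑ y : α, F y := by
    rw [← Finset.sum_fiberwise_of_maps_to (g := proj) (t := Finset.univ)
      (fun _ _ => Finset.mem_univ _) (fun H => μ ⊥ H)]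
    apply Finset.sum_congr rfl
    intro y _
    rw [fiber_eq _ y ?_ ?_]
    · intro H hH
      simpa using hH
    · intro H h
      simp only [Finset.mem_filter, Finset.mem_univ, true_and]
      exact fiber_p H y h
  rw [hmain]
  calc ∑ y : α, F y
      = ∑ y : α, Gg y := Finset.sum_congr rfl (fun y _ => hFG y)
    _ = ∑ y₁ : {K : Subgroup G₁ // IsPGroup p K},
          ∑ y₂ : {K : Subgroup G₂ // IsPGroup p K}, μ₁ ⊥ ↑y₁ * μ₂ ⊥ ↑y₂ :=
        Fintype.sum_prod_type _
    _ = (∑ y₁ : {K : Subgroup G₁ // IsPGroup p K}, μ₁ ⊥ ↑y₁)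
          * (∑ y₂ : {K : Subgroup G₂ // IsPGroup p K}, μ₂ ⊥ ↑y₂) := by
        rw [Finset.sum_mul_sum]
    _ = (∑ H₁ ∈ Finset.univ.filter fun H₁ : Subgroup G₁ => IsPGroup p H₁, μ₁ ⊥ H₁) *
        (∑ H₂ ∈ Finset.univ.filter fun H₂ : Subgroup G₂ => IsPGroup p H₂, μ₂ ⊥ H₂) := by
        rw [← Finset.sum_subtype (p := fun K : Subgroup G₁ => IsPGroup p K)
            (Finset.univ.filter fun H₁ : Subgroup G₁ => IsPGroup p H₁) (by simp) (μ₁ ⊥),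
          ← Finset.sum_subtype (p := fun K : Subgroup G₂ => IsPGroup p K)
            (Finset.univ.filter fun H₂ : Subgroup G₂ => IsPGroup p H₂) (by simp) (μ₂ ⊥)]
end

section
/- Let G₁ and G₂ be finite groups and p a prime. Then ∑_{H} μ(H)·|C_{G₁×G₂}(H)| = (∑_{H₁} μ(H₁)·|C_{G₁}(H₁)|) · (∑_{H₂} μ(H₂)·|C_{G₂}(H₂)|), where the sums run over all p-subgroups (including trivial) of G₁×G₂, G₁, G₂ respectively, μ(H) = μ(1,H) is the Möbius function of the subgroup lattice, and C denotes centralizer. -/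
open Classical in
theorem mob_unique_aux {β : Type*} [PartialOrder β] [Fintype β]
    (f g : β → ℚ)
    (h : ∀ B : β, (∑ y ∈ Finset.univ.filter fun y => y ≤ B, f y)
        = ∑ y ∈ Finset.univ.filter fun y => y ≤ B, g y) :
    ∀ B, f B = g B := by
  intro B
  induction B using WellFoundedLT.induction with
  | ind B ih =>
    have key : (Finset.univ.filter fun y => y ≤ B)
        = insert B (Finset.univ.filter fun y => y < B) := by
      ext y; simp [le_iff_lt_or_eq, or_comm]
    have hB : B ∉ Finset.univ.filter fun y => y < B := by simp
    have h2 := h B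
    rw [key, Finset.sum_insert hB, Finset.sum_insert hB] at h2
    have h3 : (∑ y ∈ Finset.univ.filter fun y => y < B, f y)
        = ∑ y ∈ Finset.univ.filter fun y => y < B, g y := by
      apply Finset.sum_congr rfl
      intro y hy
      exact ih y (by simpa using hy)
    linarith

theorem le_prod_iff' {G₁ G₂ : Type*} [Group G₁] [Group G₂] (H : Subgroup (G₁ × G₂))
    (B₁ : Subgroup G₁) (B₂ : Subgroup G₂) :
    H ≤ B₁.prod B₂ ↔ H.map (MonoidHom.fst G₁ G₂) ≤ B₁ ∧ H.map (MonoidHom.snd G₁ G₂) ≤ B₂ := by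
  constructor
  · intro h
    constructor
    · rintro x hx
      rw [Subgroup.mem_map] at hx
      obtain ⟨a, ha, rfl⟩ := hx
      exact (h ha).1
    · rintro x hx
      rw [Subgroup.mem_map] at hx
      obtain ⟨a, ha, rfl⟩ := hx
      exact (h ha).2
  · rintro ⟨h1, h2⟩ a ha
    exact ⟨h1 ⟨a, ha, rfl⟩, h2 ⟨a, ha, rfl⟩⟩

theorem self_le_prod' {G₁ G₂ : Type*} [Group G₁] [Group G₂] (H : Subgroup (G₁ × G₂)) :
    H ≤ (H.map (MonoidHom.fst G₁ G₂)).prod (H.map (MonoidHom.snd G₁ G₂)) :=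
  (le_prod_iff' H _ _).2 ⟨le_rfl, le_rfl⟩

theorem isPGroup_prod' {A B : Type*} [Group A] [Group B] {p : ℕ}
    (h1 : IsPGroup p A) (h2 : IsPGroup p B) : IsPGroup p (A × B) := by
  intro g
  obtain ⟨k1, hk1⟩ := h1 g.1
  obtain ⟨k2, hk2⟩ := h2 g.2
  refine ⟨k1 + k2, Prod.ext ?_ ?_⟩
  · show g.1 ^ p ^ (k1 + k2) = 1
    rw [pow_add, pow_mul, hk1, one_pow]
  · show g.2 ^ p ^ (k1 + k2) = 1
    rw [pow_add, mul_comm, pow_mul, hk2, one_pow]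

theorem cent_prod' {G₁ G₂ : Type*} [Group G₁] [Group G₂] (H : Subgroup (G₁ × G₂)) :
    Subgroup.centralizer (H : Set (G₁ × G₂))
      = (Subgroup.centralizer ((H.map (MonoidHom.fst G₁ G₂)) : Set G₁)).prod
        (Subgroup.centralizer ((H.map (MonoidHom.snd G₁ G₂)) : Set G₂)) := by
  ext z
  simp only [Subgroup.mem_centralizer_iff, Subgroup.mem_prod, SetLike.mem_coe,
    Subgroup.mem_map]
  constructor
  · intro h
    constructor
    · rintro x ⟨a, ha, rfl⟩
      exact congrArg Prod.fst (h a ha)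
    · rintro x ⟨a, ha, rfl⟩
      exact congrArg Prod.snd (h a ha)
  · rintro ⟨h1, h2⟩ a ha
    exact Prod.ext (h1 a.1 ⟨a, ha, rfl⟩) (h2 a.2 ⟨a, ha, rfl⟩)

theorem card_subgroup_prod' {G₁ G₂ : Type*} [Group G₁] [Group G₂]
    (B₁ : Subgroup G₁) (B₂ : Subgroup G₂) :
    Nat.card (B₁.prod B₂) = Nat.card B₁ * Nat.card B₂ := by
  rw [Nat.card_congr (Subgroup.prodEquiv B₁ B₂).toEquiv, Nat.card_prod]

theorem pgroup_iff' {G₁ G₂ : Type*} [Group G₁] [Group G₂] {p : ℕ}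
    (H : Subgroup (G₁ × G₂)) :
    IsPGroup p H ↔ IsPGroup p (H.map (MonoidHom.fst G₁ G₂))
      ∧ IsPGroup p (H.map (MonoidHom.snd G₁ G₂)) := by
  constructor
  · intro h
    exact ⟨h.map _, h.map _⟩
  · rintro ⟨h1, h2⟩
    have : IsPGroup p ((H.map (MonoidHom.fst G₁ G₂)).prod (H.map (MonoidHom.snd G₁ G₂))) :=
      (isPGroup_prod' h1 h2).of_equiv (Subgroup.prodEquiv _ _).symm
    exact this.to_le (self_le_prod' H)

open Classical in
theorem mob_prod_key {G₁ G₂ : Type*} [Group G₁] [Group G₂]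
    [Fintype (Subgroup (G₁ × G₂))] [Fintype (Subgroup G₁)] [Fintype (Subgroup G₂)]
    (μ : Subgroup (G₁ × G₂) → Subgroup (G₁ × G₂) → ℚ)
    (hμ : ∀ A B : Subgroup (G₁ × G₂), A ≤ B →
      (∑ L ∈ Finset.univ.filter fun L => A ≤ L ∧ L ≤ B, μ A L) = if A = B then 1 else 0)
    (μ₁ : Subgroup G₁ → Subgroup G₁ → ℚ)
    (hμ₁ : ∀ A B : Subgroup G₁, A ≤ B →
      (∑ L ∈ Finset.univ.filter fun L => A ≤ L ∧ L ≤ B, μ₁ A L) = if A = B then 1 else 0)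
    (μ₂ : Subgroup G₂ → Subgroup G₂ → ℚ)
    (hμ₂ : ∀ A B : Subgroup G₂, A ≤ B →
      (∑ L ∈ Finset.univ.filter fun L => A ≤ L ∧ L ≤ B, μ₂ A L) = if A = B then 1 else 0) :
    ∀ y : Subgroup G₁ × Subgroup G₂,
      (∑ H ∈ Finset.univ.filter fun H : Subgroup (G₁ × G₂) =>
          (H.map (MonoidHom.fst G₁ G₂), H.map (MonoidHom.snd G₁ G₂)) = y, μ ⊥ H)
        = μ₁ ⊥ y.1 * μ₂ ⊥ y.2 := by
  apply mob_unique_aux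
  intro B
  rw [Finset.sum_fiberwise_eq_sum_filter]
  refine Eq.trans (Finset.sum_congr ?_ fun _ _ => rfl)
    ((hμ ⊥ (B.1.prod B.2) bot_le).trans ?_)
  · ext H
    simp [le_prod_iff', Prod.le_def, bot_le]
  · symm
    refine Eq.trans (Finset.sum_congr
      (show _ = (Finset.univ.filter fun y₁ : Subgroup G₁ => ⊥ ≤ y₁ ∧ y₁ ≤ B.1) ×ˢ
          (Finset.univ.filter fun y₂ : Subgroup G₂ => ⊥ ≤ y₂ ∧ y₂ ≤ B.2) from ?_)
      fun _ _ => rfl) ?_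
    · ext y
      simp [Prod.le_def, bot_le, Finset.mem_product]
    · rw [Finset.sum_product, ← Finset.sum_mul_sum, hμ₁ ⊥ B.1 bot_le, hμ₂ ⊥ B.2 bot_le]
      have h3 : ((⊥ : Subgroup (G₁ × G₂)) = B.1.prod B.2) ↔ (⊥ = B.1 ∧ ⊥ = B.2) := by
        rw [eq_comm, Subgroup.prod_eq_bot_iff, @eq_comm _ B.1, @eq_comm _ B.2]
      simp only [h3]
      split_ifs <;> simp_all

open Classical in
theorem stmt_13 {G₁ G₂ : Type*} [Group G₁] [Group G₂] [Fintype G₁] [Fintype G₂]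
    [Fintype (Subgroup (G₁ × G₂))] [Fintype (Subgroup G₁)] [Fintype (Subgroup G₂)]
    (p : ℕ) (hp : p.Prime)
    (μ : Subgroup (G₁ × G₂) → Subgroup (G₁ × G₂) → ℚ)
    (hμ : ∀ A B : Subgroup (G₁ × G₂), A ≤ B →
      (∑ L ∈ Finset.univ.filter fun L => A ≤ L ∧ L ≤ B, μ A L) = if A = B then 1 else 0)
    (μ₁ : Subgroup G₁ → Subgroup G₁ → ℚ)
    (hμ₁ : ∀ A B : Subgroup G₁, A ≤ B →
      (∑ L ∈ Finset.univ.filter fun L => A ≤ L ∧ L ≤ B, μ₁ A L) = if A = B then 1 else 0)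
    (μ₂ : Subgroup G₂ → Subgroup G₂ → ℚ)
    (hμ₂ : ∀ A B : Subgroup G₂, A ≤ B →
      (∑ L ∈ Finset.univ.filter fun L => A ≤ L ∧ L ≤ B, μ₂ A L) = if A = B then 1 else 0) :
    (∑ H ∈ Finset.univ.filter fun H : Subgroup (G₁ × G₂) => IsPGroup p H, μ ⊥ H * (Nat.card (Subgroup.centralizer (H : Set (G₁ × G₂))) : ℚ))
      = (∑ H₁ ∈ Finset.univ.filter fun H₁ : Subgroup G₁ => IsPGroup p H₁, μ₁ ⊥ H₁ * (Nat.card (Subgroup.centralizer (H₁ : Set G₁)) : ℚ)) *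
        (∑ H₂ ∈ Finset.univ.filter fun H₂ : Subgroup G₂ => IsPGroup p H₂, μ₂ ⊥ H₂ * (Nat.card (Subgroup.centralizer (H₂ : Set G₂)) : ℚ)) := by
  have key := mob_prod_key μ hμ μ₁ hμ₁ μ₂ hμ₂
  -- rewrite the centralizer cardinality
  have hc : ∀ H : Subgroup (G₁ × G₂),
      (Nat.card (Subgroup.centralizer (H : Set (G₁ × G₂))) : ℚ)
        = (Nat.card (Subgroup.centralizer ((H.map (MonoidHom.fst G₁ G₂)) : Set G₁)) : ℚ)
          * (Nat.card (Subgroup.centralizer ((H.map (MonoidHom.snd G₁ G₂)) : Set G₂)) : ℚ) := by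
    intro H
    rw [cent_prod' H, card_subgroup_prod']
    push_cast
    ring
  have step1 : (∑ H ∈ Finset.univ.filter fun H : Subgroup (G₁ × G₂) => IsPGroup p H,
        μ ⊥ H * (Nat.card (Subgroup.centralizer (H : Set (G₁ × G₂))) : ℚ))
      = ∑ H ∈ Finset.univ.filter fun H : Subgroup (G₁ × G₂) =>
          (H.map (MonoidHom.fst G₁ G₂), H.map (MonoidHom.snd G₁ G₂))
            ∈ ((Finset.univ.filter fun H₁ : Subgroup G₁ => IsPGroup p H₁) ×ˢ
               (Finset.univ.filter fun H₂ : Subgroup G₂ => IsPGroup p H₂)),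
          μ ⊥ H * ((Nat.card (Subgroup.centralizer ((H.map (MonoidHom.fst G₁ G₂)) : Set G₁)) : ℚ)
            * (Nat.card (Subgroup.centralizer ((H.map (MonoidHom.snd G₁ G₂)) : Set G₂)) : ℚ)) := by
    apply Finset.sum_congr
    · ext H
      simp [Finset.mem_product, pgroup_iff' H]
    · intro H _
      rw [hc H]
  rw [step1, ← Finset.sum_fiberwise_eq_sum_filter Finset.univ
    ((Finset.univ.filter fun H₁ : Subgroup G₁ => IsPGroup p H₁) ×ˢ
     (Finset.univ.filter fun H₂ : Subgroup G₂ => IsPGroup p H₂))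
    (fun H : Subgroup (G₁ × G₂) => (H.map (MonoidHom.fst G₁ G₂), H.map (MonoidHom.snd G₁ G₂)))
    (fun H => μ ⊥ H * ((Nat.card (Subgroup.centralizer ((H.map (MonoidHom.fst G₁ G₂)) : Set G₁)) : ℚ)
      * (Nat.card (Subgroup.centralizer ((H.map (MonoidHom.snd G₁ G₂)) : Set G₂)) : ℚ)))]
  rw [Finset.sum_mul_sum, ← Finset.sum_product']
  apply Finset.sum_congr rfl
  intro y hy
  calc
    (∑ H ∈ Finset.univ.filter fun H : Subgroup (G₁ × G₂) =>
        (H.map (MonoidHom.fst G₁ G₂), H.map (MonoidHom.snd G₁ G₂)) = y,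
        μ ⊥ H * ((Nat.card (Subgroup.centralizer ((H.map (MonoidHom.fst G₁ G₂)) : Set G₁)) : ℚ)
          * (Nat.card (Subgroup.centralizer ((H.map (MonoidHom.snd G₁ G₂)) : Set G₂)) : ℚ)))
      = ∑ H ∈ Finset.univ.filter fun H : Subgroup (G₁ × G₂) =>
          (H.map (MonoidHom.fst G₁ G₂), H.map (MonoidHom.snd G₁ G₂)) = y,
          μ ⊥ H * ((Nat.card (Subgroup.centralizer ((y.1 : Subgroup G₁) : Set G₁)) : ℚ)
            * (Nat.card (Subgroup.centralizer ((y.2 : Subgroup G₂) : Set G₂)) : ℚ)) := by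
        apply Finset.sum_congr rfl
        intro H hH
        have hPH : (H.map (MonoidHom.fst G₁ G₂), H.map (MonoidHom.snd G₁ G₂)) = y :=
          (Finset.mem_filter.1 hH).2
        rw [← hPH]
    _ = (∑ H ∈ Finset.univ.filter fun H : Subgroup (G₁ × G₂) =>
          (H.map (MonoidHom.fst G₁ G₂), H.map (MonoidHom.snd G₁ G₂)) = y, μ ⊥ H)
          * ((Nat.card (Subgroup.centralizer ((y.1 : Subgroup G₁) : Set G₁)) : ℚ)
            * (Nat.card (Subgroup.centralizer ((y.2 : Subgroup G₂) : Set G₂)) : ℚ)) := by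
        rw [Finset.sum_mul]
    _ = (μ₁ ⊥ y.1 * (Nat.card (Subgroup.centralizer ((y.1 : Subgroup G₁) : Set G₁)) : ℚ))
          * (μ₂ ⊥ y.2 * (Nat.card (Subgroup.centralizer ((y.2 : Subgroup G₂) : Set G₂)) : ℚ)) := by
        rw [key y]
        ring
end

section
/- Let G be a finite group with a normal Sylow p-subgroup P, let H be a nontrivial subgroup of P, and let μ be the Möbius function of the subgroup lattice of G. Then ∑_{K : H ≤ K ≤ P} μ(H,K)·|C_G(K)| = |{x ∈ G : C_P(x) = H}|. -/
open Classical in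
theorem stmt_14 {G : Type*} [Group G] [Fintype G] [Fintype (Subgroup G)]
    (p : ℕ) (hp : p.Prime)
    (P : Sylow p G) (hP : (P : Subgroup G).Normal)
    (H : Subgroup G) (hH : H ≠ ⊥) (hHP : H ≤ P)
    (μ : Subgroup G → Subgroup G → ℚ)
    (hμ : ∀ A B : Subgroup G, A ≤ B →
      (∑ L ∈ Finset.univ.filter fun L => A ≤ L ∧ L ≤ B, μ A L) = if A = B then 1 else 0) :
    (∑ K ∈ Finset.univ.filter fun K : Subgroup G => H ≤ K ∧ K ≤ P,
        μ H K * (Nat.card (Subgroup.centralizer (K : Set G)) : ℚ))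
      = ((Finset.univ.filter fun x : G =>
          (P : Subgroup G) ⊓ Subgroup.centralizer {x} = H).card : ℚ) := by
  classical
  have key : ∀ K : Subgroup G,
      (Nat.card (Subgroup.centralizer (K : Set G)) : ℚ)
        = ∑ x : G, if K ≤ Subgroup.centralizer ({x} : Set G) then (1 : ℚ) else 0 := by
    intro K
    rw [Nat.card_eq_fintype_card, Fintype.card_eq_nat_card,
      Nat.card_eq_fintype_card, Fintype.card_subtype]
    rw [Finset.card_filter]
    push_cast
    refine Finset.sum_congr rfl fun x _ => ?_
    congr 1
    simp only [eq_iff_iff]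
    constructor
    · intro hx k hk
      rw [Subgroup.mem_centralizer_iff]
      intro g hg
      rw [Set.mem_singleton_iff] at hg
      subst hg
      exact (Subgroup.mem_centralizer_iff.mp hx k hk).symm
    · intro hle
      rw [Subgroup.mem_centralizer_iff]
      intro g hg
      exact (Subgroup.mem_centralizer_iff.mp (hle hg) x (Set.mem_singleton x)).symm
  calc
    (∑ K ∈ Finset.univ.filter fun K : Subgroup G => H ≤ K ∧ K ≤ P,
        μ H K * (Nat.card (Subgroup.centralizer (K : Set G)) : ℚ))
        = ∑ K ∈ Finset.univ.filter fun K : Subgroup G => H ≤ K ∧ K ≤ P,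
            ∑ x : G, (if K ≤ Subgroup.centralizer ({x} : Set G) then μ H K else 0) := by
          refine Finset.sum_congr rfl fun K _ => ?_
          rw [key K, Finset.mul_sum]
          refine Finset.sum_congr rfl fun x _ => ?_
          rw [mul_ite, mul_one, mul_zero]
    _ = ∑ x : G, ∑ K ∈ Finset.univ.filter fun K : Subgroup G => H ≤ K ∧ K ≤ P,
            (if K ≤ Subgroup.centralizer ({x} : Set G) then μ H K else 0) :=
          Finset.sum_comm
    _ = ∑ x : G, (if H = (P : Subgroup G) ⊓ Subgroup.centralizer ({x} : Set G)
            then (1 : ℚ) else 0) := by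
          refine Finset.sum_congr rfl fun x _ => ?_
          rw [Finset.sum_ite, Finset.sum_const_zero, add_zero]
          have hfilt : ((Finset.univ.filter fun K : Subgroup G => H ≤ K ∧ K ≤ P).filter
              fun K => K ≤ Subgroup.centralizer ({x} : Set G))
              = Finset.univ.filter fun K : Subgroup G =>
                  H ≤ K ∧ K ≤ (P : Subgroup G) ⊓ Subgroup.centralizer ({x} : Set G) := by
            ext K
            simp only [Finset.mem_filter, Finset.mem_univ, true_and, le_inf_iff]
            tauto
          rw [hfilt]
          by_cases hle : H ≤ (P : Subgroup G) ⊓ Subgroup.centralizer ({x} : Set G)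
          · exact hμ H _ hle
          · rw [if_neg (fun h => hle (le_of_eq h))]
            apply Finset.sum_eq_zero
            intro K hK
            simp only [Finset.mem_filter, Finset.mem_univ, true_and] at hK
            exact absurd (hK.1.trans hK.2) hle
    _ = ((Finset.univ.filter fun x : G =>
          (P : Subgroup G) ⊓ Subgroup.centralizer {x} = H).card : ℚ) := by
          rw [Finset.card_filter]
          push_cast
          refine Finset.sum_congr rfl fun x _ => ?_
          simp [eq_comm]
end

section
/- Let G be a finite group, p a prime, and H, K nontrivial p-subgroups of G. If there exist x ∈ G with H^x ≤ K and y ∈ G with K^y ≤ H such that conjugation by xy restricted to H is an inner automorphism of H and conjugation by yx restricted to K is an inner automorphism of K, then H and K are isomorphic in the Frobenius category: there exist x' ∈ G with H^{x'} = K such that conjugation by x' is an isomorphism H → K induced by G-conjugation. -/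
theorem stmt_15 {G : Type*} [Group G] [Fintype G] (p : ℕ) (hp : p.Prime)
    (H K : Subgroup G) (hH : H ≠ ⊥) (hK : K ≠ ⊥)
    (hHp : IsPGroup p H) (hKp : IsPGroup p K)
    (x y : G)
    (hx : ∀ a ∈ H, x⁻¹ * a * x ∈ K)
    (hy : ∀ a ∈ K, y⁻¹ * a * y ∈ H)
    (hxy : ∃ h ∈ H, ∀ a ∈ H, (x * y)⁻¹ * a * (x * y) = h⁻¹ * a * h)
    (hyx : ∃ k ∈ K, ∀ a ∈ K, (y * x)⁻¹ * a * (y * x) = k⁻¹ * a * k) :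
    ∃ x' : G, H.map (MulAut.conj x'⁻¹).toMonoidHom = K := by
  refine ⟨x, ?_⟩
  have hle : H.map (MulAut.conj x⁻¹).toMonoidHom ≤ K := by
    rintro b ⟨a, ha, rfl⟩
    simpa [mul_assoc] using hx a ha
  have hle' : K.map (MulAut.conj y⁻¹).toMonoidHom ≤ H := by
    rintro b ⟨a, ha, rfl⟩
    simpa [mul_assoc] using hy a ha
  have hcardH : Nat.card (H.map (MulAut.conj x⁻¹).toMonoidHom) = Nat.card H := by
    apply Nat.card_congr
    exact (Subgroup.equivMapOfInjective H _ (MulAut.conj x⁻¹).injective).symm.toEquiv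
  have hcardK : Nat.card (K.map (MulAut.conj y⁻¹).toMonoidHom) = Nat.card K := by
    apply Nat.card_congr
    exact (Subgroup.equivMapOfInjective K _ (MulAut.conj y⁻¹).injective).symm.toEquiv
  have h1 : Nat.card H ≤ Nat.card K := hcardH ▸ Subgroup.card_le_of_le hle
  have h2 : Nat.card K ≤ Nat.card H := hcardK ▸ Subgroup.card_le_of_le hle'
  exact Subgroup.eq_of_le_of_card_ge hle (hcardH ▸ le_antisymm h1 h2).ge
end

section
/- Let G be a finite group with Sylow p-subgroup P and let H be a p-subgroup of G. Then H is p-selfcentralizing (i.e., Z(H) = C_H(H) is a Sylow p-subgroup of C_G(H)) if and only if for every g ∈ G with H^g ≤ P one has C_P(H^g) ≤ H^g. -/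
/-- The conjugate subgroup `H^g = g⁻¹ H g`. -/
def conjSub {G : Type*} [Group G] (g : G) (H : Subgroup G) : Subgroup G :=
  H.map (MulAut.conj g⁻¹).toMonoidHom

/-- A `p`-subgroup `H ≤ G` is `p`-selfcentralizing if `Z(H) = C_H(H)` is a Sylow
`p`-subgroup of `C_G(H)`: i.e. it is a `p`-group of index prime to `p` in `C_G(H)`. -/
def IsPSelfCentralizing (p : ℕ) {G : Type*} [Group G] (H : Subgroup G) : Prop :=
  IsPGroup p ↥(H ⊓ Subgroup.centralizer (H : Set G)) ∧
  ¬ p ∣ (H ⊓ Subgroup.centralizer (H : Set G)).relIndex (Subgroup.centralizer (H : Set G))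

section Aux

variable {G : Type*} [Group G]

lemma centralizer_map_equiv (e : G ≃* G) (H : Subgroup G) :
    Subgroup.centralizer ((H.map e.toMonoidHom : Subgroup G) : Set G)
      = (Subgroup.centralizer (H : Set G)).map e.toMonoidHom := by
  ext x
  rw [Subgroup.mem_map_equiv, Subgroup.mem_centralizer_iff, Subgroup.mem_centralizer_iff]
  constructor
  · intro hx h hh
    have h1 := hx (e h) (Subgroup.mem_map.mpr ⟨h, hh, rfl⟩)
    have h2 := congrArg e.symm h1
    simpa using h2
  · intro hx h hh
    obtain ⟨y, hy, rfl⟩ := Subgroup.mem_map.mp hh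
    have h1 := hx y hy
    have h2 := congrArg e h1
    simpa using h2

lemma map_map_symm (e : G ≃* G) (X : Subgroup G) :
    (X.map e.toMonoidHom).map e.symm.toMonoidHom = X := by
  ext x; simp [Subgroup.mem_map_equiv]

lemma map_symm_map (e : G ≃* G) (X : Subgroup G) :
    (X.map e.symm.toMonoidHom).map e.toMonoidHom = X := by
  ext x; simp [Subgroup.mem_map_equiv]

lemma le_normalizer_of_le_centralizer {S H : Subgroup G}
    (h : S ≤ Subgroup.centralizer (H : Set G)) : S ≤ Subgroup.normalizer (H : Set G) := by
  intro x hx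
  rw [Subgroup.mem_normalizer_iff]
  intro y
  constructor
  · intro hy
    have := h hx y hy
    rwa [← this, mul_assoc, mul_inv_cancel, mul_one]
  · intro hy
    have hc := h hx (x * y * x⁻¹) hy
    have h1 : x * y = x * (x * y * x⁻¹) := by rw [← hc]; group
    have h2 := mul_left_cancel h1
    rw [h2]; exact hy

lemma char_selfcentralizing {G : Type*} [Group G] [Fintype G] (p : ℕ) (hp : p.Prime)
    (H : Subgroup G) (hH : IsPGroup p H) :
    IsPSelfCentralizing p H ↔
      ∀ S : Subgroup G, IsPGroup p S → S ≤ Subgroup.centralizer (H : Set G) → S ≤ H := by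
  haveI : Fact p.Prime := ⟨hp⟩
  set C := Subgroup.centralizer (H : Set G) with hC
  set Z := H ⊓ C with hZ
  constructor
  · rintro ⟨hZp, hnd⟩ S hS hSC
    -- Z ⊔ S is a p-group
    have hZle : Z ≤ Subgroup.centralizer (Z : Set G) := by
      calc Z ≤ C := inf_le_right
      _ ≤ Subgroup.centralizer (Z : Set G) :=
        Subgroup.centralizer_le (by exact_mod_cast (inf_le_left : Z ≤ H))
    have hSle : S ≤ Subgroup.centralizer (Z : Set G) := by
      calc S ≤ C := hSC
      _ ≤ Subgroup.centralizer (Z : Set G) :=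
        Subgroup.centralizer_le (by exact_mod_cast (inf_le_left : Z ≤ H))
    have hR : IsPGroup p ((S ⊔ Z : Subgroup G)) :=
      IsPGroup.to_sup_of_normal_right' hS hZp (le_normalizer_of_le_centralizer hSle)
    -- relindex argument
    have h1 : Z ≤ S ⊔ Z := le_sup_right
    have h2 : (S ⊔ Z : Subgroup G) ≤ C := sup_le hSC inf_le_right
    have hmul := Subgroup.relIndex_mul_relIndex Z (S ⊔ Z) C h1 h2
    have hd1 : Z.relIndex (S ⊔ Z) ∣ Z.relIndex C := Dvd.intro _ hmul
    obtain ⟨n, hn⟩ := (IsPGroup.iff_card (p := p) (G := ↥(S ⊔ Z : Subgroup G))).mp hR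
    have hd2 : Z.relIndex (S ⊔ Z) ∣ p ^ n := by
      rw [← hn, Subgroup.relIndex]
      exact Subgroup.index_dvd_card (G := ↥(S ⊔ Z : Subgroup G)) (H := Z.subgroupOf (S ⊔ Z))
    obtain ⟨m, hm, hme⟩ := (Nat.dvd_prime_pow hp).mp hd2
    have hm0 : m = 0 := by
      by_contra hm0
      exact hnd (dvd_trans (dvd_trans (dvd_pow_self p hm0) (hme ▸ dvd_refl _)) hd1)
    have : Z.relIndex (S ⊔ Z) = 1 := by rw [hme, hm0, pow_zero]
    have hle : (S ⊔ Z : Subgroup G) ≤ Z := Subgroup.relIndex_eq_one.mp this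
    exact le_trans (le_trans le_sup_left hle) inf_le_left
  · intro h
    refine ⟨hH.to_inf_left, ?_⟩
    obtain ⟨S⟩ : Nonempty (Sylow p ↥C) := inferInstance
    have hmap : ((S : Subgroup ↥C).map C.subtype) ≤ H := by
      apply h
      · exact S.isPGroup'.map C.subtype
      · exact Subgroup.map_subtype_le _
    have hle : (S : Subgroup ↥C) ≤ Z.subgroupOf C := by
      rw [Subgroup.subgroupOf, ← Subgroup.map_le_iff_le_comap]
      exact le_inf hmap (Subgroup.map_subtype_le _)
    have heq : Z.subgroupOf C = ↑S :=
      S.is_maximal' (hH.to_inf_left.comap_subtype) hle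
    have : Z.relIndex C = (S : Subgroup ↥C).index := by
      rw [Subgroup.relIndex, heq]
    rw [this]
    exact S.not_dvd_index

end Aux

theorem stmt_16 {G : Type*} [Group G] [Fintype G] (p : ℕ) (hp : p.Prime)
    (P : Sylow p G) (H : Subgroup G) (hH : IsPGroup p H) :
    IsPSelfCentralizing p H ↔
      ∀ g : G, conjSub g H ≤ P →
        (P : Subgroup G) ⊓ Subgroup.centralizer ((conjSub g H : Subgroup G) : Set G) ≤
          conjSub g H := by
  haveI : Fact p.Prime := ⟨hp⟩
  constructor
  · intro hSC g hgP
    set e : G ≃* G := MulAut.conj g⁻¹ with he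
    have hK : conjSub g H = H.map e.toMonoidHom := rfl
    have hstar := (char_selfcentralizing p hp H hH).mp hSC
    set S₀ : Subgroup G := (P : Subgroup G) ⊓
      Subgroup.centralizer ((conjSub g H : Subgroup G) : Set G) with hS₀
    have h1 : S₀.map e.symm.toMonoidHom ≤ H := by
      apply hstar
      · exact (P.isPGroup'.to_inf_left).map _
      · have : S₀ ≤ Subgroup.centralizer ((H.map e.toMonoidHom : Subgroup G) : Set G) := by
          rw [← hK]; exact inf_le_right
        rw [centralizer_map_equiv] at this
        calc S₀.map e.symm.toMonoidHom
            ≤ ((Subgroup.centralizer (H : Set G)).map e.toMonoidHom).map e.symm.toMonoidHom :=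
              Subgroup.map_mono this
        _ = Subgroup.centralizer (H : Set G) := map_map_symm e _
    have h2 : (S₀.map e.symm.toMonoidHom).map e.toMonoidHom ≤ H.map e.toMonoidHom :=
      Subgroup.map_mono h1
    rw [map_symm_map, ← hK] at h2
    exact h2
  · intro h
    apply (char_selfcentralizing p hp H hH).mpr
    intro S hS hSC
    have hR : IsPGroup p ((S ⊔ H : Subgroup G)) :=
      IsPGroup.to_sup_of_normal_right' hS hH (le_normalizer_of_le_centralizer hSC)
    obtain ⟨Q, hRQ⟩ := hR.exists_le_sylow
    obtain ⟨g, hg⟩ := MulAction.exists_smul_eq G Q P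
    set f : G ≃* G := MulAut.conj g with hf
    have hQP : (Q : Subgroup G).map f.toMonoidHom = ↑P := by
      rw [← hg]; rfl
    have hKey : conjSub g⁻¹ H = H.map f.toMonoidHom := by
      rw [conjSub, inv_inv]
    have hHP : conjSub g⁻¹ H ≤ P := by
      rw [hKey, ← hQP]
      exact Subgroup.map_mono (le_trans le_sup_right hRQ)
    have h2 := h g⁻¹ hHP
    have hSP : S.map f.toMonoidHom ≤ (P : Subgroup G) := by
      rw [← hQP]; exact Subgroup.map_mono (le_trans le_sup_left hRQ)
    have hScent : S.map f.toMonoidHom ≤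
        Subgroup.centralizer ((conjSub g⁻¹ H : Subgroup G) : Set G) := by
      rw [hKey, centralizer_map_equiv]
      exact Subgroup.map_mono hSC
    have h3 : S.map f.toMonoidHom ≤ H.map f.toMonoidHom := by
      rw [← hKey]
      exact le_trans (le_inf hSP hScent) h2
    intro x hx
    have := h3 (Subgroup.mem_map.mpr ⟨x, hx, rfl⟩)
    obtain ⟨y, hy, hxy⟩ := Subgroup.mem_map.mp this
    rwa [← (f.injective hxy)]
end

section
/- Let G be a finite group with Sylow p-subgroup P and let Q ≤ P be a subgroup such that C_P(Q) is a Sylow p-subgroup of C_G(Q). Then the subgroup Q·C_P(Q) is p-selfcentralizing. -/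
private lemma cent_le_norm {G : Type*} [Group G] (R : Subgroup G) :
    Subgroup.centralizer (R : Set G) ≤ (Subgroup.normalizer (R : Set G)) := by
  intro x hx
  rw [Subgroup.mem_normalizer_iff]
  intro h
  constructor
  · intro hh
    have := hx h hh
    have : x * h * x⁻¹ = h := by
      rw [← this]; group
    rw [this]; exact hh
  · intro hh
    have := hx _ hh
    have heq : x * h = x * (x * h * x⁻¹) := by
      rw [← this]; group
    have : h = x * h * x⁻¹ := mul_left_cancel heq
    rw [this]; exact hh

theorem stmt_18 {G : Type*} [Group G] [Fintype G] (p : ℕ) (hp : p.Prime)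
    (P : Sylow p G) (Q : Subgroup G) (hQ : Q ≤ P)
    (hC : ¬ p ∣ ((P : Subgroup G) ⊓ Subgroup.centralizer (Q : Set G)).relIndex
        (Subgroup.centralizer (Q : Set G))) :
    IsPSelfCentralizing p (Q ⊔ ((P : Subgroup G) ⊓ Subgroup.centralizer (Q : Set G))) := by
  set R : Subgroup G := (P : Subgroup G) ⊓ Subgroup.centralizer (Q : Set G) with hR
  set H : Subgroup G := Q ⊔ R with hH
  set C : Subgroup G := Subgroup.centralizer (H : Set G) with hCdef
  set N : Subgroup G := Subgroup.centralizer (Q : Set G) with hN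
  have hHP : H ≤ (P : Subgroup G) := sup_le hQ inf_le_left
  have hQH : Q ≤ H := le_sup_left
  have hRH : R ≤ H := le_sup_right
  have hCN : C ≤ N := Subgroup.centralizer_le (SetLike.coe_subset_coe.2 hQH)
  have hCcR : C ≤ Subgroup.centralizer (R : Set G) :=
    Subgroup.centralizer_le (SetLike.coe_subset_coe.2 hRH)
  have hCM : C ≤ (Subgroup.normalizer (R : Set G)) := hCcR.trans (cent_le_norm R)
  have hHC : H ⊓ C = R ⊓ C := by
    apply le_antisymm
    · exact le_inf (inf_le_inf hHP hCN) inf_le_right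
    · exact inf_le_inf_right C hRH
  constructor
  · exact P.isPGroup'.to_le (inf_le_left.trans hHP)
  · rw [hHC, Subgroup.inf_relIndex_right]
    have hRM : R ≤ (Subgroup.normalizer (R : Set G)) := Subgroup.le_normalizer
    have key : R.relIndex C = R.relIndex (R ⊔ C) := by
      calc R.relIndex C
          = (R.subgroupOf (Subgroup.normalizer (R : Set G))).relIndex (C.subgroupOf (Subgroup.normalizer (R : Set G))) :=
            (Subgroup.relIndex_subgroupOf hCM).symm
        _ = (R.subgroupOf (Subgroup.normalizer (R : Set G))).relIndex
              (C.subgroupOf (Subgroup.normalizer (R : Set G)) ⊔ R.subgroupOf (Subgroup.normalizer (R : Set G))) :=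
            (Subgroup.relIndex_sup_right _ _).symm
        _ = (R.subgroupOf (Subgroup.normalizer (R : Set G))).relIndex ((C ⊔ R).subgroupOf (Subgroup.normalizer (R : Set G))) := by
            rw [Subgroup.subgroupOf_sup hCM hRM]
        _ = R.relIndex (C ⊔ R) := Subgroup.relIndex_subgroupOf (sup_le hCM hRM)
        _ = R.relIndex (R ⊔ C) := by rw [sup_comm]
    have hdvd : R.relIndex (R ⊔ C) ∣ R.relIndex N :=
      ⟨(R ⊔ C).relIndex N,
        (Subgroup.relIndex_mul_relIndex _ _ _ le_sup_left (sup_le inf_le_right hCN)).symm⟩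
    intro h
    exact hC (dvd_trans (key ▸ h) hdvd)
end
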